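/- Let m, M be positive integers with m < M, and let c : Fin m → ℕ. Define N = Σ_{k} M^{c k}. Then for every t ∈ ℕ, the number of indices k with c k = t equals (N / M^t) mod M (where / denotes natural-number division). Consequently, the minimum value of c over Fin m equals the least t ∈ ℕ such that (N / M^t) mod M ≠ 0. -/

import Mathlib

theorem stmt5 (m M : ℕ) (hm : 0 < m) (hM : m < M) (c : Fin m → ℕ)
    (N : ℕ) (hN : N = ∑ k, M ^ (c k)) :
    (∀ t : ℕ, (Finset.univ.filter (fun k => c k = t)).card = N / M ^ t % M) ∧
    (⨅ k, c k) = sInf {t : ℕ | N / M ^ t % M ≠ 0} := by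
  classical
  have hM1 : 1 < M := lt_of_le_of_lt hm hM
  have hMpos : 0 < M := by omega
  have key : ∀ t : ℕ, (Finset.univ.filter (fun k => c k = t)).card = N / M ^ t % M := by
    intro t
    set S₁ := Finset.univ.filter (fun k : Fin m => c k < t) with hS₁
    set S₂ := Finset.univ.filter (fun k : Fin m => ¬ c k < t) with hS₂
    have hsplit : N = (∑ k ∈ S₁, M ^ c k) + ∑ k ∈ S₂, M ^ c k := by
      rw [hN, Finset.sum_filter_add_sum_filter_not]
    have hcard1 : S₁.card ≤ m := le_trans (Finset.card_filter_le _ _) (by simp)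
    have hA : M * (∑ k ∈ S₁, M ^ c k) < M * M ^ t := by
      rw [Finset.mul_sum]
      calc ∑ k ∈ S₁, M * M ^ c k ≤ ∑ k ∈ S₁, M ^ t := by
            refine Finset.sum_le_sum fun k hk => ?_
            have hk' : c k < t := (Finset.mem_filter.mp hk).2
            calc M * M ^ c k = M ^ (c k + 1) := by ring
              _ ≤ M ^ t := Nat.pow_le_pow_right hMpos hk'
        _ = S₁.card * M ^ t := by rw [Finset.sum_const, smul_eq_mul]
        _ ≤ m * M ^ t := Nat.mul_le_mul_right _ hcard1
        _ < M * M ^ t := (Nat.mul_lt_mul_right (pow_pos hMpos t)).mpr hM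
    have hA' : (∑ k ∈ S₁, M ^ c k) < M ^ t := Nat.lt_of_mul_lt_mul_left hA
    have hB : ∑ k ∈ S₂, M ^ c k = M ^ t * ∑ k ∈ S₂, M ^ (c k - t) := by
      rw [Finset.mul_sum]
      refine Finset.sum_congr rfl fun k hk => ?_
      have hk' : t ≤ c k := by
        have := (Finset.mem_filter.mp hk).2; omega
      rw [← pow_add]
      congr 1
      omega
    have hdiv : N / M ^ t = ∑ k ∈ S₂, M ^ (c k - t) := by
      rw [hsplit, hB, Nat.add_mul_div_left _ _ (pow_pos hMpos t),
        Nat.div_eq_of_lt hA', Nat.zero_add]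
    rw [hdiv, Finset.sum_nat_mod]
    have hterm : ∀ k ∈ S₂, M ^ (c k - t) % M = if c k = t then 1 else 0 := by
      intro k hk
      have hk' : t ≤ c k := by
        have := (Finset.mem_filter.mp hk).2; omega
      by_cases h : c k = t
      · simp [h, Nat.mod_eq_of_lt hM1]
      · have hd : M ∣ M ^ (c k - t) := dvd_pow_self M (by omega)
        simp [h, Nat.eq_zero_of_dvd_of_lt, Nat.mod_eq_zero_of_dvd hd]
    rw [Finset.sum_congr rfl hterm, ← Finset.card_filter]
    have hfilter : S₂.filter (fun k => c k = t) = Finset.univ.filter (fun k => c k = t) := by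
      ext k
      simp only [hS₂, Finset.mem_filter, Finset.mem_univ, true_and]
      omega
    rw [hfilter]
    have hcle : (Finset.univ.filter (fun k => c k = t)).card < M :=
      lt_of_le_of_lt (le_trans (Finset.card_filter_le _ _) (by simp)) hM
    rw [Nat.mod_eq_of_lt hcle]
  refine ⟨key, ?_⟩
  have hset : {t : ℕ | N / M ^ t % M ≠ 0} = Set.range c := by
    ext t
    simp only [Set.mem_setOf_eq, Set.mem_range, ← key t]
    rw [← Nat.pos_iff_ne_zero, Finset.card_pos, Finset.filter_nonempty_iff]
    simp [eq_comm]
  rw [hset]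
  rfl
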